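/- For integers 1 ≤ k ≤ n-1 and all t ≥ 0, the exponential polynomials E_{nk}(t) = A_{nk}(e^{-t}) satisfy the differential-difference relation d/dt [E_{n,k-1}(t) + E_{nk}(t)] = -(k-1) E_{n,k-1}(t) + k E_{nk}(t), where E_{n,k}(t) denotes A_{nk}(e^{-t}). -/

import Mathlib

open Real MeasureTheory

/-- A-kind orthogonal polynomials. -/
noncomputable def aKind (n k : ℕ) (x : ℝ) : ℝ :=
  ∑ j ∈ Finset.range (n - k + 1),
    (-1 : ℝ) ^ j * ((n - k).choose j : ℝ) * ((n + k + j).choose (n - k) : ℝ) * x ^ (k + j)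

/-- Orthogonal exponential polynomials `E_{nk}(t) = A_{nk}(e^{-t})`. -/
noncomputable def expA (n k : ℕ) (t : ℝ) : ℝ := aKind n k (Real.exp (-t))

lemma expA_eq (n k : ℕ) (s : ℝ) :
    expA n k s = ∑ j ∈ Finset.range (n - k + 1),
      (-1 : ℝ) ^ j * ((n - k).choose j : ℝ) * ((n + k + j).choose (n - k) : ℝ)
        * Real.exp (-((k + j : ℕ) : ℝ) * s) := by
  unfold expA aKind
  refine Finset.sum_congr rfl fun j _ => ?_
  rw [← Real.exp_nat_mul]
  ring_nf

lemma expA_hasDerivAt (n k : ℕ) (t : ℝ) :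
    HasDerivAt (expA n k) (∑ j ∈ Finset.range (n - k + 1),
      (-1 : ℝ) ^ j * ((n - k).choose j : ℝ) * ((n + k + j).choose (n - k) : ℝ)
        * (-((k + j : ℕ) : ℝ)) * Real.exp (-((k + j : ℕ) : ℝ) * t)) t := by
  have hfun : expA n k = fun s => ∑ j ∈ Finset.range (n - k + 1),
      (-1 : ℝ) ^ j * ((n - k).choose j : ℝ) * ((n + k + j).choose (n - k) : ℝ)
        * Real.exp (-((k + j : ℕ) : ℝ) * s) := funext (expA_eq n k)
  rw [hfun]
  apply HasDerivAt.fun_sum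
  intro j _
  have h1 : HasDerivAt (fun s : ℝ => -((k + j : ℕ) : ℝ) * s) (-((k + j : ℕ) : ℝ)) t := by
    simpa using (hasDerivAt_id t).const_mul (-((k + j : ℕ) : ℝ))
  have h2 := (h1.exp).const_mul
      ((-1 : ℝ) ^ j * ((n - k).choose j : ℝ) * ((n + k + j).choose (n - k) : ℝ))
  convert h2 using 1 <;> try rfl
  ring

lemma key_nat (n k j : ℕ) (hkn : k + 1 ≤ n) :
    (j + 1) * (n - k + 1).choose (j + 1) * (n + k + j).choose (n - k + 1)
      = (2 * k + j) * (n - k).choose j * (n + k + j).choose (n - k) := by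
  have h1 : (n - k + 1) * (n - k).choose j = (n - k + 1).choose (j + 1) * (j + 1) :=
    Nat.add_one_mul_choose_eq (n - k) j
  have h2 : (n + k + j).choose (n - k + 1) * (n - k + 1)
      = (n + k + j).choose (n - k) * (2 * k + j) := by
    have h := Nat.choose_succ_right_eq (n + k + j) (n - k)
    have h3 : n + k + j - (n - k) = 2 * k + j := by omega
    rw [h3] at h; exact h
  have hpos : 0 < n - k + 1 := by omega
  apply Nat.eq_of_mul_eq_mul_left hpos
  calc (n - k + 1) * ((j + 1) * (n - k + 1).choose (j + 1) * (n + k + j).choose (n - k + 1))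
      = ((n - k + 1).choose (j + 1) * (j + 1)) *
          ((n + k + j).choose (n - k + 1) * (n - k + 1)) := by ring
    _ = ((n - k + 1) * (n - k).choose j) *
          ((n + k + j).choose (n - k) * (2 * k + j)) := by rw [← h1, h2]
    _ = (n - k + 1) * ((2 * k + j) * (n - k).choose j * (n + k + j).choose (n - k)) := by ring

theorem stmt_18 (n k : ℕ) (hk1 : 1 ≤ k) (hk2 : k ≤ n - 1)
    (t : ℝ) (ht : 0 ≤ t) :
    deriv (fun s => expA n (k - 1) s + expA n k s) t =
      -((k : ℝ) - 1) * expA n (k - 1) t + (k : ℝ) * expA n k t := by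
  have hkn : k + 1 ≤ n := by omega
  have hmk : n - (k - 1) = (n - k) + 1 := by omega
  have h1 := expA_hasDerivAt n (k - 1) t
  have h2 := expA_hasDerivAt n k t
  rw [(h1.fun_add h2).deriv, expA_eq n (k - 1) t, expA_eq n k t]
  -- names for the four sums
  set D1 : ℝ := ∑ j ∈ Finset.range (n - (k-1) + 1),
      (-1 : ℝ) ^ j * ((n - (k-1)).choose j : ℝ) * ((n + (k-1) + j).choose (n - (k-1)) : ℝ)
        * (-(((k-1) + j : ℕ) : ℝ)) * Real.exp (-(((k-1) + j : ℕ) : ℝ) * t) with hD1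
  set D2 : ℝ := ∑ j ∈ Finset.range (n - k + 1),
      (-1 : ℝ) ^ j * ((n - k).choose j : ℝ) * ((n + k + j).choose (n - k) : ℝ)
        * (-((k + j : ℕ) : ℝ)) * Real.exp (-((k + j : ℕ) : ℝ) * t) with hD2
  set S1 : ℝ := ∑ j ∈ Finset.range (n - (k-1) + 1),
      (-1 : ℝ) ^ j * ((n - (k-1)).choose j : ℝ) * ((n + (k-1) + j).choose (n - (k-1)) : ℝ)
        * Real.exp (-(((k-1) + j : ℕ) : ℝ) * t) with hS1
  set S2 : ℝ := ∑ j ∈ Finset.range (n - k + 1),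
      (-1 : ℝ) ^ j * ((n - k).choose j : ℝ) * ((n + k + j).choose (n - k) : ℝ)
        * Real.exp (-((k + j : ℕ) : ℝ) * t) with hS2
  -- the two rearranged sums
  have goal2 : ∑ j ∈ Finset.range (n - (k-1) + 1),
      (-(j : ℝ)) * ((-1 : ℝ) ^ j * ((n - (k-1)).choose j : ℝ) *
        ((n + (k-1) + j).choose (n - (k-1)) : ℝ)) * Real.exp (-(((k-1) + j : ℕ) : ℝ) * t)
      = ∑ j ∈ Finset.range (n - k + 1),
      ((2 * k + j : ℕ) : ℝ) * ((-1 : ℝ) ^ j * ((n - k).choose j : ℝ) *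
        ((n + k + j).choose (n - k) : ℝ)) * Real.exp (-((k + j : ℕ) : ℝ) * t) := by
    rw [hmk, Finset.sum_range_succ']
    simp only [Nat.cast_zero, neg_zero, zero_mul, add_zero]
    refine Finset.sum_congr rfl fun j hj => ?_
    have e1 : (k - 1) + (j + 1) = k + j := by omega
    have e2 : n + (k - 1) + (j + 1) = n + k + j := by omega
    rw [e1, e2]
    have hkeyR : ((j : ℝ) + 1) * ((n - k + 1).choose (j + 1) : ℝ) *
          ((n + k + j).choose (n - k + 1) : ℝ)
        = ((2 * k + j : ℕ) : ℝ) * ((n - k).choose j : ℝ) * ((n + k + j).choose (n - k) : ℝ) := by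
      exact_mod_cast key_nat n k j hkn
    push_cast at hkeyR ⊢
    linear_combination ((-1 : ℝ) ^ j * Real.exp (-((k : ℝ) + j) * t)) * hkeyR
  have e1 : D1 + ((k : ℝ) - 1) * S1 = ∑ j ∈ Finset.range (n - (k-1) + 1),
      (-(j : ℝ)) * ((-1 : ℝ) ^ j * ((n - (k-1)).choose j : ℝ) *
        ((n + (k-1) + j).choose (n - (k-1)) : ℝ)) * Real.exp (-(((k-1) + j : ℕ) : ℝ) * t) := by
    rw [hD1, hS1, Finset.mul_sum, ← Finset.sum_add_distrib]
    refine Finset.sum_congr rfl fun j _ => ?_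
    have hc : (((k - 1) + j : ℕ) : ℝ) = (k : ℝ) - 1 + j := by
      push_cast [Nat.cast_sub hk1]; ring
    rw [hc]; ring
  have e2 : (k : ℝ) * S2 - D2 = ∑ j ∈ Finset.range (n - k + 1),
      ((2 * k + j : ℕ) : ℝ) * ((-1 : ℝ) ^ j * ((n - k).choose j : ℝ) *
        ((n + k + j).choose (n - k) : ℝ)) * Real.exp (-((k + j : ℕ) : ℝ) * t) := by
    rw [hD2, hS2, Finset.mul_sum, ← Finset.sum_sub_distrib]
    refine Finset.sum_congr rfl fun j _ => ?_
    push_cast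
    ring
  linarith [goal2, e1, e2]
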